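/- For all x=(x₂,x₃)∈ℝ², v>0 and s∈ℝ, writing y(s) = (x₂·cosh s − x₃·sinh s, −x₂·sinh s + x₃·cosh s), c⁰(u) = 2^{−3/2}·(4u₂² − 1/π)·e^{−2π u₃²}, ψ_A⁰(u) = −(1/√2)·u₂·u₃·e^{−2π u₃²} and ψ_B⁰(u) = (1/(4√2·π))·e^{−2π u₃²}, the following two identities hold: v^{3/2}·∂/∂v [ v^{−1/2}·cosh(s)·c⁰(√v·y(s)) ] = ∂/∂s [ cosh(s)·ψ_A⁰(√v·y(s)) + sinh(s)·ψ_B⁰(√v·y(s)) ] and v^{3/2}·∂/∂v [ v^{−1/2}·sinh(s)·c⁰(√v·y(s)) ] = ∂/∂s [ sinh(s)·ψ_A⁰(√v·y(s)) + cosh(s)·ψ_B⁰(√v·y(s)) ]. (This is the explicit coordinate form of paper Theorem 5.6: ω(L)φ₁,₁ = d ψ₀,₁ on the symmetric space D_W ≅ ℝ of SO₀(1,1).) -/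

import Mathlib

open MeasureTheory

/-- `y(s) = m(-s)x` for `x = (x₂,x₃)` in the Minkowski plane of signature `(1,1)`. -/
noncomputable def yv (x₂ x₃ s : ℝ) : ℝ × ℝ :=
  (x₂ * Real.cosh s - x₃ * Real.sinh s, -x₂ * Real.sinh s + x₃ * Real.cosh s)

/-- The coefficient `c⁰` of the Kudla–Millson Schwartz form `φ⁰₁,₁`. -/
noncomputable def c0 (u : ℝ × ℝ) : ℝ :=
  (2:ℝ) ^ (-(3:ℝ)/2) * (4 * u.1 ^ 2 - 1 / Real.pi) * Real.exp (-(2 * Real.pi * u.2 ^ 2))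

/-- The `e₂`-component `ψ_A⁰` of `ψ⁰₀,₁`. -/
noncomputable def psiA0 (u : ℝ × ℝ) : ℝ :=
  -(1 / Real.sqrt 2) * u.1 * u.2 * Real.exp (-(2 * Real.pi * u.2 ^ 2))

/-- The `e₃`-component `ψ_B⁰` of `ψ⁰₀,₁`. -/
noncomputable def psiB0 (u : ℝ × ℝ) : ℝ :=
  1 / (4 * Real.sqrt 2 * Real.pi) * Real.exp (-(2 * Real.pi * u.2 ^ 2))

lemma keyKM (x₂ x₃ v s : ℝ) (hv : 0 < v) (p q : ℝ → ℝ)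
    (hp : HasDerivAt p (q s) s) (hq : HasDerivAt q (p s) s) :
    ∃ dv ds : ℝ,
      HasDerivAt (fun v' : ℝ => v' ^ (-(1:ℝ)/2) * p s *
        c0 (Real.sqrt v' * (yv x₂ x₃ s).1, Real.sqrt v' * (yv x₂ x₃ s).2)) dv v ∧
      HasDerivAt (fun s' : ℝ =>
        p s' * psiA0 (Real.sqrt v * (yv x₂ x₃ s').1, Real.sqrt v * (yv x₂ x₃ s').2)
        + q s' * psiB0 (Real.sqrt v * (yv x₂ x₃ s').1, Real.sqrt v * (yv x₂ x₃ s').2))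
        ds s ∧
      v ^ ((3:ℝ)/2) * dv = ds := by
  have hw0 : Real.sqrt v ≠ 0 := (Real.sqrt_pos.mpr hv).ne'
  -- v-side
  have hsq : HasDerivAt Real.sqrt (1 / (2 * Real.sqrt v)) v := Real.hasDerivAt_sqrt hv.ne'
  have ha := hsq.mul_const (yv x₂ x₃ s).1
  have hb := hsq.mul_const (yv x₂ x₃ s).2
  have hP := ((ha.pow 2).const_mul (4:ℝ)).sub_const (1 / Real.pi)
  have hEv := (((hb.pow 2).const_mul (2 * Real.pi)).neg).exp
  have hr : HasDerivAt (fun v' : ℝ => v' ^ (-(1:ℝ)/2)) (-(1:ℝ)/2 * v ^ (-(1:ℝ)/2 - 1)) v :=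
    Real.hasDerivAt_rpow_const (Or.inl hv.ne')
  have hdv := (hr.mul_const (p s)).mul ((hP.const_mul ((2:ℝ) ^ (-(3:ℝ)/2))).mul hEv)
  -- s-side
  have hy1 : HasDerivAt (fun s' : ℝ => x₂ * Real.cosh s' - x₃ * Real.sinh s')
      (x₂ * Real.sinh s - x₃ * Real.cosh s) s :=
    ((Real.hasDerivAt_cosh s).const_mul x₂).sub ((Real.hasDerivAt_sinh s).const_mul x₃)
  have hy2 : HasDerivAt (fun s' : ℝ => -x₂ * Real.sinh s' + x₃ * Real.cosh s')
      (-x₂ * Real.cosh s + x₃ * Real.sinh s) s :=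
    ((Real.hasDerivAt_sinh s).const_mul (-x₂)).add ((Real.hasDerivAt_cosh s).const_mul x₃)
  have hwy1 := hy1.const_mul (Real.sqrt v)
  have hwy2 := hy2.const_mul (Real.sqrt v)
  have hEs := (((hwy2.pow 2).const_mul (2 * Real.pi)).neg).exp
  have hA := (((hwy1.const_mul (-(1 / Real.sqrt 2))).mul hwy2).mul hEs)
  have hB := hEs.const_mul (1 / (4 * Real.sqrt 2 * Real.pi))
  have hds := (hp.mul hA).add (hq.mul hB)
  simp only [yv, psiA0, psiB0, c0]
  refine ⟨_, _, hdv, hds, ?_⟩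
  · have hs2 : Real.sqrt 2 ≠ 0 := by positivity
    have h32 : v ^ ((3:ℝ)/2) = Real.sqrt v ^ 3 := by
      rw [Real.sqrt_eq_rpow, ← Real.rpow_natCast (v ^ ((1:ℝ)/2)) 3, ← Real.rpow_mul hv.le]
      norm_num
    have hm2 : v ^ (-(1:ℝ)/2) = (Real.sqrt v)⁻¹ := by
      rw [Real.sqrt_eq_rpow, show -(1:ℝ)/2 = -(1/2) by norm_num, Real.rpow_neg hv.le]
    have hm1 : v ^ (-(1:ℝ)/2 - 1) = (Real.sqrt v ^ 3)⁻¹ := by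
      rw [← h32, show -(1:ℝ)/2 - 1 = -((3:ℝ)/2) by norm_num, Real.rpow_neg hv.le]
    have e2 : Real.sqrt 2 ^ 2 = 2 := Real.sq_sqrt (by norm_num)
    have hpos2 : (0:ℝ) < Real.sqrt 2 := Real.sqrt_pos.mpr (by norm_num)
    have hK : (2:ℝ) ^ (-(3:ℝ)/2) = Real.sqrt 2 / 4 := by
      have h1 : (2:ℝ) ^ (-(3:ℝ)/2) = (2 * Real.sqrt 2)⁻¹ := by
        rw [Real.sqrt_eq_rpow, show -(3:ℝ)/2 = -(1 + 1/2) by norm_num,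
          Real.rpow_neg (by norm_num : (0:ℝ) ≤ 2),
          Real.rpow_add (by norm_num : (0:ℝ) < 2), Real.rpow_one]
      rw [h1]
      field_simp
      nlinarith [e2]
    have hA2 : (1:ℝ) / Real.sqrt 2 = Real.sqrt 2 / 2 := by
      rw [div_eq_div_iff hpos2.ne' (by norm_num : (2:ℝ) ≠ 0)]
      nlinarith [e2]
    have hB2 : (1:ℝ) / (4 * Real.sqrt 2 * Real.pi) = Real.sqrt 2 / (8 * Real.pi) := by
      rw [div_eq_div_iff (by positivity) (by positivity)]
      nlinarith [e2, Real.pi_pos]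
    simp only [yv, h32, hm2, hm1, hK, hA2, hB2, Pi.mul_apply, Pi.pow_apply, Pi.neg_apply]
    field_simp
    ring

/-- Paper Theorem 5.6 in coordinates (`ω(L)φ₁,₁ = dψ₀,₁` on `D_W ≅ ℝ`): the two
identities
`v^{3/2}·∂/∂v [v^{-1/2}·cosh(s)·c⁰(√v·y(s))] = ∂/∂s [cosh(s)·ψ_A⁰(√v·y(s)) + sinh(s)·ψ_B⁰(√v·y(s))]`
and
`v^{3/2}·∂/∂v [v^{-1/2}·sinh(s)·c⁰(√v·y(s))] = ∂/∂s [sinh(s)·ψ_A⁰(√v·y(s)) + cosh(s)·ψ_B⁰(√v·y(s))]`. -/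
theorem stmt18 (x₂ x₃ v s : ℝ) (hv : 0 < v) :
    (∃ dv ds : ℝ,
      HasDerivAt (fun v' : ℝ => v' ^ (-(1:ℝ)/2) * Real.cosh s *
        c0 (Real.sqrt v' * (yv x₂ x₃ s).1, Real.sqrt v' * (yv x₂ x₃ s).2)) dv v ∧
      HasDerivAt (fun s' : ℝ =>
        Real.cosh s' * psiA0 (Real.sqrt v * (yv x₂ x₃ s').1, Real.sqrt v * (yv x₂ x₃ s').2)
        + Real.sinh s' * psiB0 (Real.sqrt v * (yv x₂ x₃ s').1, Real.sqrt v * (yv x₂ x₃ s').2))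
        ds s ∧
      v ^ ((3:ℝ)/2) * dv = ds) ∧
    (∃ dv ds : ℝ,
      HasDerivAt (fun v' : ℝ => v' ^ (-(1:ℝ)/2) * Real.sinh s *
        c0 (Real.sqrt v' * (yv x₂ x₃ s).1, Real.sqrt v' * (yv x₂ x₃ s).2)) dv v ∧
      HasDerivAt (fun s' : ℝ =>
        Real.sinh s' * psiA0 (Real.sqrt v * (yv x₂ x₃ s').1, Real.sqrt v * (yv x₂ x₃ s').2)
        + Real.cosh s' * psiB0 (Real.sqrt v * (yv x₂ x₃ s').1, Real.sqrt v * (yv x₂ x₃ s').2))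
        ds s ∧
      v ^ ((3:ℝ)/2) * dv = ds) :=
  ⟨keyKM x₂ x₃ v s hv Real.cosh Real.sinh (Real.hasDerivAt_cosh s) (Real.hasDerivAt_sinh s),
   keyKM x₂ x₃ v s hv Real.sinh Real.cosh (Real.hasDerivAt_sinh s) (Real.hasDerivAt_cosh s)⟩
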